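/- Let q be even, m ≥ 1, and define the GDJ function f(x_1,...,x_m) = (q/2)∑_{l=1}^{m-1} x_{π(l)} x_{π(l+1)} + ∑_{l=1}^{m} g_l x_l + g_0 over Z_q for a permutation π of {1,...,m} and g_l ∈ Z_q. Then the pair of sequences (ξ^{f}, ξ^{f + (q/2) x_{π(1)}}) of length 2^m is a Golay complementary pair: ρ(C_0;u) + ρ(C_1;u) = 0 for all 0 < |u| < 2^m, and equals 2^{m+1} at u = 0. -/

import Mathlib

open Finset Complex

/-- `bit l i` is the `l`-th binary digit of `i` (positions indexed from 1). -/
def bit (l i : ℕ) : ℕ := i / 2 ^ (l - 1) % 2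

/-- The primitive `q`-th root of unity `ξ = e^{2πi/q}`. -/
noncomputable def xi (q : ℕ) : ℂ := Complex.exp (2 * Real.pi * Complex.I / q)

/-- The GDJ generalized Boolean function evaluated at index `i`. -/
def fGDJ (q m : ℕ) (π : Equiv.Perm ℕ) (g : ℕ → ℕ) (i : ℕ) : ℕ :=
  q / 2 * (∑ l ∈ Finset.Icc 1 (m - 1), bit (π l) i * bit (π (l + 1)) i) +
    (∑ l ∈ Finset.Icc 1 m, g l * bit l i) + g 0

/-- The GDJ pair members `C_k` (k = 0,1), sequences of length `2^m`. -/
noncomputable def CGDJ (q m : ℕ) (π : Equiv.Perm ℕ) (g : ℕ → ℕ) (k i : ℕ) : ℂ :=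
  xi q ^ (fGDJ q m π g i + q / 2 * k * bit (π 1) i)

/-- Aperiodic cross-correlation of two length-`L` complex sequences at integer shift `u`. -/
noncomputable def rho (L : ℕ) (C D : ℕ → ℂ) (u : ℤ) : ℂ :=
  if 0 ≤ u then ∑ i ∈ Finset.range (L - u.toNat), C (i + u.toNat) * (starRingEnd ℂ) (D i)
  else ∑ i ∈ Finset.range (L - (-u).toNat), C i * (starRingEnd ℂ) (D (i + (-u).toNat))

namespace GDJ

/-! ### Bit arithmetic -/

lemma bit_lt (l i : ℕ) : bit l i < 2 := Nat.mod_lt _ (by norm_num)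

lemma two_pow_pos (e : ℕ) : 0 < 2 ^ e := Nat.pow_pos (by norm_num)

lemma N_div_high (e hi c lo : ℕ) (hc : c < 2) (hlo : lo < 2 ^ e) :
    (hi * 2 ^ (e + 1) + c * 2 ^ e + lo) / 2 ^ (e + 1) = hi := by
  have h : c * 2 ^ e + lo < 2 ^ (e + 1) := by
    have : c * 2 ^ e ≤ 2 ^ e := by nlinarith [two_pow_pos e]
    rw [pow_succ]; omega
  rw [add_assoc, mul_comm hi, Nat.mul_add_div (two_pow_pos _), Nat.div_eq_of_lt h, add_zero]

lemma N_mid (e hi c lo : ℕ) (hc : c < 2) (hlo : lo < 2 ^ e) :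
    (hi * 2 ^ (e + 1) + c * 2 ^ e + lo) / 2 ^ e % 2 = c := by
  have h1 : hi * 2 ^ (e + 1) + c * 2 ^ e + lo = 2 ^ e * (hi * 2 + c) + lo := by ring
  rw [h1, Nat.mul_add_div (two_pow_pos _), Nat.div_eq_of_lt hlo, add_zero,
    Nat.mul_add_mod', Nat.mod_eq_of_lt hc]

lemma N_low (e d hi c lo : ℕ) (hd : d < e) :
    (hi * 2 ^ (e + 1) + c * 2 ^ e + lo) / 2 ^ d % 2 = lo / 2 ^ d % 2 := by
  have h1 : hi * 2 ^ (e + 1) + c * 2 ^ e + lo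
      = 2 ^ d * (2 * (hi * 2 ^ (e - d) + c * 2 ^ (e - d - 1))) + lo := by
    have h2 : 2 ^ (e + 1) = 2 ^ d * (2 * 2 ^ (e - d)) := by
      rw [← pow_succ', ← pow_add]; congr 1; omega
    have h3 : 2 ^ e = 2 ^ d * (2 * 2 ^ (e - d - 1)) := by
      rw [← pow_succ', ← pow_add]; congr 1; omega
    rw [h2, h3]; ring
  rw [h1, Nat.mul_add_div (two_pow_pos _), Nat.mul_add_mod]

lemma decomp (e a : ℕ) : a / 2 ^ (e + 1) * 2 ^ (e + 1) + a / 2 ^ e % 2 * 2 ^ e + a % 2 ^ e = a := by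
  have h3 : a / 2 ^ e / 2 = a / 2 ^ (e + 1) := by rw [Nat.div_div_eq_div_mul, pow_succ]
  conv_rhs => rw [← Nat.div_add_mod a (2 ^ e), ← Nat.div_add_mod (a / 2 ^ e) 2]
  rw [← h3]; ring

/-- flip the `p`-th bit (positions from 1). -/
def flip (p a : ℕ) : ℕ :=
  a / 2 ^ (p - 1 + 1) * 2 ^ (p - 1 + 1) + (1 - bit p a) * 2 ^ (p - 1) + a % 2 ^ (p - 1)

lemma bit_flip_self (p a : ℕ) : bit p (flip p a) = 1 - bit p a := by
  have := bit_lt p a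
  simpa [bit, flip] using N_mid (p - 1) (a / 2 ^ (p-1+1)) (1 - bit p a) (a % 2 ^ (p-1))
    (by omega) (Nat.mod_lt _ (two_pow_pos _))

lemma bit_flip_ne {l p : ℕ} (hl : 1 ≤ l) (hp : 1 ≤ p) (hne : l ≠ p) (a : ℕ) :
    bit l (flip p a) = bit l a := by
  have hb := bit_lt p a
  set e := p - 1 with he
  set d := l - 1 with hd
  have hflip : flip p a
      = a / 2 ^ (e + 1) * 2 ^ (e + 1) + (1 - bit p a) * 2 ^ e + a % 2 ^ e := rfl
  have hde : d ≠ e := by omega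
  show flip p a / 2 ^ d % 2 = a / 2 ^ d % 2
  rcases lt_or_gt_of_ne hde with h | h
  · have h1 := N_low e d (a / 2 ^ (e+1)) (1 - bit p a) (a % 2 ^ e) h
    have h2 := N_low e d (a / 2 ^ (e+1)) (a / 2 ^ e % 2) (a % 2 ^ e) h
    rw [decomp] at h2
    rw [hflip, h1, ← h2]
  · have h1 := N_div_high e (a / 2 ^ (e+1)) (1 - bit p a) (a % 2 ^ e) (by omega)
      (Nat.mod_lt _ (two_pow_pos _))
    have h2 := N_div_high e (a / 2 ^ (e+1)) (a / 2 ^ e % 2) (a % 2 ^ e)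
      (Nat.mod_lt _ (by norm_num)) (Nat.mod_lt _ (two_pow_pos _))
    rw [decomp] at h2
    have key : ∀ x : ℕ, x / 2 ^ d = x / 2 ^ (e + 1) / 2 ^ (d - (e + 1)) := by
      intro x
      rw [Nat.div_div_eq_div_mul, ← pow_add]
      congr 2; omega
    rw [hflip, key, h1, key a, h2]

lemma flip_eq (p a : ℕ) :
    flip p a = if bit p a = 0 then a + 2 ^ (p - 1) else a - 2 ^ (p - 1) := by
  have hb : bit p a < 2 := bit_lt p a
  have hd := decomp (p - 1) a
  have hbit : a / 2 ^ (p - 1) % 2 = bit p a := rfl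
  rw [hbit] at hd
  have hflip : flip p a
      = a / 2 ^ (p - 1 + 1) * 2 ^ (p - 1 + 1) + (1 - bit p a) * 2 ^ (p - 1) + a % 2 ^ (p - 1) :=
    rfl
  set X := a / 2 ^ (p - 1 + 1) * 2 ^ (p - 1 + 1)
  set Y := (2 : ℕ) ^ (p - 1)
  set L := a % 2 ^ (p - 1)
  have : bit p a = 0 ∨ bit p a = 1 := by omega
  rcases this with h | h <;> rw [h] at hd hflip ⊢ <;> simp at hd hflip ⊢ <;> omega

lemma flip_flip (p a : ℕ) : flip p (flip p a) = a := by
  have hb : bit p a < 2 := bit_lt p a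
  have h1 : flip p a / 2 ^ (p - 1 + 1) = a / 2 ^ (p - 1 + 1) :=
    N_div_high (p-1) _ _ _ (by omega) (Nat.mod_lt _ (two_pow_pos _))
  have h2 : bit p (flip p a) = 1 - bit p a := bit_flip_self p a
  have h3 : flip p a % 2 ^ (p - 1) = a % 2 ^ (p - 1) := by
    have h4 : flip p a = 2 ^ (p-1) * (a / 2 ^ (p-1+1) * 2 + (1 - bit p a)) + a % 2 ^ (p-1) := by
      show a / 2 ^ (p-1+1) * 2 ^ (p-1+1) + (1 - bit p a) * 2 ^ (p-1) + a % 2 ^ (p-1) = _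
      ring
    rw [h4, Nat.mul_add_mod, Nat.mod_eq_of_lt (Nat.mod_lt _ (two_pow_pos _))]
  show flip p a / 2 ^ (p-1+1) * 2 ^ (p-1+1) + (1 - bit p (flip p a)) * 2 ^ (p-1)
      + flip p a % 2 ^ (p-1) = a
  rw [h1, h2, h3]
  have h5 : 1 - (1 - bit p a) = bit p a := by omega
  rw [h5]
  have h6 := decomp (p - 1) a
  have hbit : a / 2 ^ (p - 1) % 2 = bit p a := rfl
  rw [hbit] at h6
  exact h6

lemma bit_one_le {p a : ℕ} (h : bit p a = 1) : 2 ^ (p - 1) ≤ a := by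
  by_contra hc
  push_neg at hc
  have : a / 2 ^ (p - 1) = 0 := Nat.div_eq_of_lt hc
  simp [bit, this] at h

lemma flip_add {p a u : ℕ} (h : bit p a = bit p (a + u)) :
    flip p a + u = flip p (a + u) := by
  have h1 := flip_eq p a
  have h2 := flip_eq p (a + u)
  have hb : bit p a < 2 := bit_lt p a
  have : bit p a = 0 ∨ bit p a = 1 := by omega
  rcases this with h0 | h0
  · rw [h1, h2, ← h, h0]; simp; omega
  · have ha := bit_one_le h0
    rw [h1, h2, ← h, h0]; simp; omega

lemma flip_lt {p m a : ℕ} (hp : p ≤ m) (hp1 : 1 ≤ p) (ha : a < 2 ^ m) : flip p a < 2 ^ m := by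
  have hb : bit p a < 2 := bit_lt p a
  have hpow : 2 ^ (m - p) * 2 ^ (p - 1 + 1) = 2 ^ m := by
    rw [← pow_add]; congr 1; omega
  have hhi : a / 2 ^ (p - 1 + 1) < 2 ^ (m - p) := by
    rw [Nat.div_lt_iff_lt_mul (two_pow_pos _), hpow]; exact ha
  have hflip : flip p a
      = a / 2 ^ (p - 1 + 1) * 2 ^ (p - 1 + 1) + (1 - bit p a) * 2 ^ (p - 1) + a % 2 ^ (p - 1) :=
    rfl
  have hr : (1 - bit p a) * 2 ^ (p - 1) + a % 2 ^ (p - 1) < 2 ^ (p - 1 + 1) := by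
    have h1 : (1 - bit p a) * 2 ^ (p - 1) ≤ 1 * 2 ^ (p - 1) :=
      Nat.mul_le_mul_right _ (by omega)
    rw [one_mul] at h1
    have h2 : a % 2 ^ (p - 1) < 2 ^ (p - 1) := Nat.mod_lt _ (two_pow_pos _)
    rw [pow_succ]; omega
  calc flip p a < a / 2 ^ (p - 1 + 1) * 2 ^ (p - 1 + 1) + 2 ^ (p - 1 + 1) := by
        rw [hflip, add_assoc]; exact Nat.add_lt_add_left hr _
    _ = (a / 2 ^ (p - 1 + 1) + 1) * 2 ^ (p - 1 + 1) := by ring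
    _ ≤ 2 ^ (m - p) * 2 ^ (p - 1 + 1) := Nat.mul_le_mul_right _ (by omega)
    _ = 2 ^ m := hpow

lemma flip_ne {p a : ℕ} : flip p a ≠ a := by
  intro hcon
  have h1 := bit_flip_self p a
  have hb := bit_lt p a
  rw [hcon] at h1
  omega

lemma eq_of_bit_eq : ∀ (m a b : ℕ), a < 2 ^ m → b < 2 ^ m →
    (∀ l, 1 ≤ l → l ≤ m → bit l a = bit l b) → a = b := by
  intro m
  induction m with
  | zero => intro a b ha hb _; simp at ha hb; omega
  | succ m ih =>
    intro a b ha hb h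
    have h1 : bit 1 a = bit 1 b := h 1 le_rfl (by omega)
    have hmod : a % 2 = b % 2 := by simpa [bit] using h1
    have hbits : ∀ l, 1 ≤ l → l ≤ m → bit l (a / 2) = bit l (b / 2) := by
      intro l hl hlm
      have key : ∀ x : ℕ, bit l (x / 2) = bit (l + 1) x := by
        intro x
        show x / 2 / 2 ^ (l - 1) % 2 = x / 2 ^ (l + 1 - 1) % 2
        rw [Nat.div_div_eq_div_mul, ← pow_succ']
        congr 3
        omega
      rw [key, key]
      exact h (l + 1) (by omega) (by omega)
    have ha2 : a / 2 < 2 ^ m := by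
      rw [Nat.div_lt_iff_lt_mul (by norm_num), ← pow_succ]; exact ha
    have hb2 : b / 2 < 2 ^ m := by
      rw [Nat.div_lt_iff_lt_mul (by norm_num), ← pow_succ]; exact hb
    have := ih (a / 2) (b / 2) ha2 hb2 hbits
    omega

/-! ### Root of unity machinery -/

lemma xi_ne (q : ℕ) : xi q ≠ 0 := Complex.exp_ne_zero _

noncomputable def E (q : ℕ) (n : ℤ) : ℂ := xi q ^ n

lemma E_add (q : ℕ) (a b : ℤ) : E q (a + b) = E q a * E q b := zpow_add₀ (xi_ne q) a b

lemma E_nat (q : ℕ) (n : ℕ) : E q n = xi q ^ n := zpow_natCast _ _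

lemma xi_pow_half {q : ℕ} (hq : 2 ∣ q) (hq0 : 0 < q) : xi q ^ (q / 2) = -1 := by
  obtain ⟨t, rfl⟩ := hq
  have ht : (t : ℂ) ≠ 0 := by
    simp only [ne_eq, Nat.cast_eq_zero]; omega
  have h2 : (2 * t) / 2 = t := by omega
  rw [h2, xi, ← Complex.exp_nat_mul]
  have : (t : ℂ) * (2 * Real.pi * Complex.I / (↑(2 * t))) = Real.pi * Complex.I := by
    push_cast
    field_simp
  rw [this, Complex.exp_pi_mul_I]

lemma E_half {q : ℕ} (hq : 2 ∣ q) (hq0 : 0 < q) : E q ((q / 2 : ℕ)) = -1 := by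
  rw [E_nat]; exact xi_pow_half hq hq0

lemma E_neg_half {q : ℕ} (hq : 2 ∣ q) (hq0 : 0 < q) : E q (-(q / 2 : ℕ)) = -1 := by
  have h := E_add q ((q / 2 : ℕ)) (-(q / 2 : ℕ))
  simp only [add_neg_cancel] at h
  have h0 : E q 0 = 1 := zpow_zero _
  rw [h0, E_half hq hq0] at h
  have := h.symm
  field_simp at this ⊢
  linear_combination -this

lemma conj_xi (q : ℕ) : (starRingEnd ℂ) (xi q) = (xi q)⁻¹ := by
  rw [xi, ← Complex.exp_conj, ← Complex.exp_neg]
  congr 1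
  simp [map_div₀, map_mul, Complex.conj_I, map_ofNat]
  ring

lemma term_eq (q : ℕ) (A B : ℕ) :
    xi q ^ A * (starRingEnd ℂ) (xi q ^ B) = E q ((A : ℤ) - B) := by
  rw [map_pow, conj_xi, inv_pow, ← zpow_natCast (xi q) A, ← zpow_natCast (xi q) B,
    ← zpow_neg, sub_eq_add_neg, E_add, E]
  rfl

lemma E_add_half {q : ℕ} (hq : 2 ∣ q) (hq0 : 0 < q) (x : ℤ) (s : ℤ) (hs : s = 1 ∨ s = -1) :
    E q (x + (q / 2 : ℕ) * s) = -E q x := by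
  rcases hs with rfl | rfl
  · rw [mul_one, E_add, E_half hq hq0]; ring
  · rw [mul_neg_one, E_add, E_neg_half hq hq0]; ring

lemma norm_xi (q : ℕ) : xi q * (starRingEnd ℂ) (xi q) = 1 := by
  rw [conj_xi]
  exact mul_inv_cancel₀ (xi_ne q)

lemma self_term (q : ℕ) (A : ℕ) : xi q ^ A * (starRingEnd ℂ) (xi q ^ A) = 1 := by
  rw [map_pow, ← mul_pow, norm_xi, one_pow]

/-! ### The key cancellation -/

section Main

variable (q m : ℕ) (π : Equiv.Perm ℕ) (g : ℕ → ℕ)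

lemma lin_diff (hπ : ∀ α, α ∈ Finset.Icc 1 m ↔ π α ∈ Finset.Icc 1 m)
    {p : ℕ} (hp : p ∈ Finset.Icc 1 m) (a : ℕ) :
    (∑ l ∈ Finset.Icc 1 m, ((g l : ℤ) * bit l (flip p a))) -
      ∑ l ∈ Finset.Icc 1 m, ((g l : ℤ) * bit l a)
      = (g p : ℤ) * (1 - 2 * (bit p a : ℤ)) := by
  have hp1 : 1 ≤ p := (Finset.mem_Icc.mp hp).1
  rw [← Finset.sum_sub_distrib]
  rw [Finset.sum_eq_single_of_mem p hp]
  · rw [bit_flip_self]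
    have hb := bit_lt p a
    push_cast [Nat.cast_sub (show bit p a ≤ 1 by omega)]
    ring
  · intro l hl hne
    rw [bit_flip_ne (Finset.mem_Icc.mp hl).1 hp1 hne]
    ring

lemma delta (hm : 1 ≤ m) (hπ : ∀ α, α ∈ Finset.Icc 1 m ↔ π α ∈ Finset.Icc 1 m)
    {v : ℕ} (hv2 : 2 ≤ v) (hvm : v ≤ m) (i j : ℕ)
    (hagree : ∀ l, 1 ≤ l → l < v → bit (π l) j = bit (π l) i)
    (hdiff : bit (π v) j ≠ bit (π v) i) :
    ∃ s : ℤ, (s = 1 ∨ s = -1) ∧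
      ((fGDJ q m π g (flip (π (v-1)) j) : ℤ) - (fGDJ q m π g (flip (π (v-1)) i) : ℤ))
        = ((fGDJ q m π g j : ℤ) - (fGDJ q m π g i : ℤ)) + ((q / 2 : ℕ) : ℤ) * s := by
  set p := π (v - 1) with hpdef
  have hw : v - 1 ∈ Finset.Icc 1 m := Finset.mem_Icc.mpr ⟨by omega, by omega⟩
  have hp : p ∈ Finset.Icc 1 m := (hπ (v - 1)).mp hw
  have hp1 : 1 ≤ p := (Finset.mem_Icc.mp hp).1
  have hpm : p ≤ m := (Finset.mem_Icc.mp hp).2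
  have hpij : bit p j = bit p i := hagree (v - 1) (by omega) (by omega)
  have hvmem : v ∈ Finset.Icc 1 m := Finset.mem_Icc.mpr ⟨by omega, hvm⟩
  have hpv : π v ≠ p := fun h => by
    have := π.injective h; omega
  have hpv1 : 1 ≤ π v := (Finset.mem_Icc.mp ((hπ v).mp hvmem)).1
  -- the quadratic sum difference
  set s : ℤ := (1 - 2 * (bit p i : ℤ)) * ((bit (π v) j : ℤ) - (bit (π v) i : ℤ)) with hsdef
  have hbpj := bit_lt p j
  have hbpi := bit_lt p i
  have hbvj := bit_lt (π v) j
  have hbvi := bit_lt (π v) i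
  have hs : s = 1 ∨ s = -1 := by
    have e1 : bit p i = 0 ∨ bit p i = 1 := by omega
    have e2 : (bit (π v) j = 0 ∧ bit (π v) i = 1) ∨ (bit (π v) j = 1 ∧ bit (π v) i = 0) := by
      omega
    rcases e1 with h1 | h1 <;> rcases e2 with ⟨h2, h3⟩ | ⟨h2, h3⟩ <;>
      simp [hsdef, h1, h2, h3] <;> norm_num
  refine ⟨s, hs, ?_⟩
  have hQ : ∑ l ∈ Finset.Icc 1 (m - 1),
      (((bit (π l) (flip p j) : ℤ) * bit (π (l+1)) (flip p j))
        - ((bit (π l) (flip p i) : ℤ) * bit (π (l+1)) (flip p i))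
        - ((bit (π l) j : ℤ) * bit (π (l+1)) j)
        + ((bit (π l) i : ℤ) * bit (π (l+1)) i)) = s := by
    have hwmem : v - 1 ∈ Finset.Icc 1 (m - 1) := Finset.mem_Icc.mpr ⟨by omega, by omega⟩
    rw [Finset.sum_eq_single_of_mem (v - 1) hwmem]
    · have hv1 : v - 1 + 1 = v := by omega
      rw [hv1, ← hpdef, bit_flip_self, bit_flip_self,
        bit_flip_ne hpv1 hp1 hpv, bit_flip_ne hpv1 hp1 hpv]
      push_cast [Nat.cast_sub (show bit p j ≤ 1 by omega),
        Nat.cast_sub (show bit p i ≤ 1 by omega)]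
      rw [hsdef, hpij]
      push_cast
      ring
    · intro l hl hlne
      have hl1 : 1 ≤ l := (Finset.mem_Icc.mp hl).1
      have hlm : l ≤ m - 1 := (Finset.mem_Icc.mp hl).2
      have hlI : l ∈ Finset.Icc 1 m := Finset.mem_Icc.mpr ⟨hl1, by omega⟩
      have hl1I : l + 1 ∈ Finset.Icc 1 m := Finset.mem_Icc.mpr ⟨by omega, by omega⟩
      have hπl1 : 1 ≤ π l := (Finset.mem_Icc.mp ((hπ l).mp hlI)).1
      have hπl11 : 1 ≤ π (l + 1) := (Finset.mem_Icc.mp ((hπ (l+1)).mp hl1I)).1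
      have hπlp : π l ≠ p := fun h => hlne (π.injective h)
      by_cases hc : l + 1 = v - 1
      · -- the l = v - 2 term
        rw [bit_flip_ne hπl1 hp1 hπlp, bit_flip_ne hπl1 hp1 hπlp, hc, ← hpdef,
          bit_flip_self, bit_flip_self]
        have hagl : bit (π l) j = bit (π l) i := hagree l hl1 (by omega)
        push_cast [Nat.cast_sub (show bit p j ≤ 1 by omega),
          Nat.cast_sub (show bit p i ≤ 1 by omega)]
        rw [hagl, hpij]
        ring
      · have hπl1p : π (l + 1) ≠ p := fun h => hc (π.injective h)
        rw [bit_flip_ne hπl1 hp1 hπlp, bit_flip_ne hπl1 hp1 hπlp,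
          bit_flip_ne hπl11 hp1 hπl1p, bit_flip_ne hπl11 hp1 hπl1p]
        ring
  have hL := lin_diff m π g hπ hp i
  have hLj := lin_diff m π g hπ hp j
  -- expand fGDJ and conclude
  have hexp : ∀ a : ℕ, (fGDJ q m π g a : ℤ)
      = ((q / 2 : ℕ) : ℤ) * (∑ l ∈ Finset.Icc 1 (m-1), (bit (π l) a : ℤ) * (bit (π (l+1)) a : ℤ))
        + (∑ l ∈ Finset.Icc 1 m, (g l : ℤ) * (bit l a : ℤ)) + (g 0 : ℤ) := by
    intro a
    simp only [fGDJ]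
    push_cast
    ring
  rw [Finset.sum_add_distrib, Finset.sum_sub_distrib, Finset.sum_sub_distrib] at hQ
  rw [hpij] at hLj
  rw [hexp, hexp, hexp, hexp]
  linear_combination ((q / 2 : ℕ) : ℤ) * hQ + hLj - hL

end Main

end GDJ
namespace GDJ

section Main2

variable (q m : ℕ) (π : Equiv.Perm ℕ) (g : ℕ → ℕ)

/-- the summand in `ρ(C₀;u) + ρ(C₁;u)`. -/
noncomputable def T (u i : ℕ) : ℂ :=
  CGDJ q m π g 0 (i + u) * (starRingEnd ℂ) (CGDJ q m π g 0 i) +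
    CGDJ q m π g 1 (i + u) * (starRingEnd ℂ) (CGDJ q m π g 1 i)

lemma T_eq (u i : ℕ) :
    T q m π g u i
      = E q ((fGDJ q m π g (i + u) : ℤ) - fGDJ q m π g i)
        + E q (((fGDJ q m π g (i + u) : ℤ) + (q / 2 : ℕ) * (bit (π 1) (i + u) : ℤ))
            - ((fGDJ q m π g i : ℤ) + (q / 2 : ℕ) * (bit (π 1) i : ℤ))) := by
  simp only [T, CGDJ, term_eq]
  have h0 : ∀ a : ℕ, ((fGDJ q m π g a + q / 2 * 0 * bit (π 1) a : ℕ) : ℤ) = (fGDJ q m π g a : ℤ) := by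
    intro a; push_cast; ring
  have h1 : ∀ a : ℕ, ((fGDJ q m π g a + q / 2 * 1 * bit (π 1) a : ℕ) : ℤ)
      = (fGDJ q m π g a : ℤ) + ((q / 2 : ℕ) : ℤ) * (bit (π 1) a : ℤ) := by
    intro a; push_cast; ring
  rw [h0, h0, h1, h1]

lemma T_agree (hq : 2 ∣ q) (hq0 : 0 < q) {u i : ℕ}
    (h : bit (π 1) (i + u) = bit (π 1) i) :
    T q m π g u i = 2 * E q ((fGDJ q m π g (i + u) : ℤ) - fGDJ q m π g i) := by
  rw [T_eq, h]
  rw [show ((fGDJ q m π g (i+u) : ℤ) + (q / 2 : ℕ) * (bit (π 1) i : ℤ))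
      - ((fGDJ q m π g i : ℤ) + (q / 2 : ℕ) * (bit (π 1) i : ℤ))
      = (fGDJ q m π g (i+u) : ℤ) - fGDJ q m π g i by ring]
  ring

lemma T_disagree (hq : 2 ∣ q) (hq0 : 0 < q) {u i : ℕ}
    (h : bit (π 1) (i + u) ≠ bit (π 1) i) :
    T q m π g u i = 0 := by
  rw [T_eq]
  have h1 := bit_lt (π 1) (i + u)
  have h2 := bit_lt (π 1) i
  set s : ℤ := (bit (π 1) (i + u) : ℤ) - (bit (π 1) i : ℤ) with hs
  have hs1 : s = 1 ∨ s = -1 := by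
    simp only [hs]
    omega
  have : ((fGDJ q m π g (i + u) : ℤ) + (q / 2 : ℕ) * (bit (π 1) (i + u) : ℤ))
      - ((fGDJ q m π g i : ℤ) + (q / 2 : ℕ) * (bit (π 1) i : ℤ))
      = ((fGDJ q m π g (i + u) : ℤ) - fGDJ q m π g i) + (q / 2 : ℕ) * s := by
    rw [hs]; ring
  rw [this, E_add_half hq hq0 _ s hs1]
  ring

/-- set of positions (as permuted indices) where `i+u` and `i` differ. -/
def D (u i : ℕ) : Set ℕ := {l | l ∈ Finset.Icc 1 m ∧ bit (π l) (i + u) ≠ bit (π l) i}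

noncomputable def V (u i : ℕ) : ℕ := sInf (D m π u i)

/-- the involution. -/
noncomputable def G (u i : ℕ) : ℕ :=
  if bit (π 1) (i + u) = bit (π 1) i then flip (π (V m π u i - 1)) i else i

lemma D_nonempty (hm : 1 ≤ m) (hπ : ∀ α, α ∈ Finset.Icc 1 m ↔ π α ∈ Finset.Icc 1 m)
    {u i : ℕ} (hu : 0 < u) (hiu : i + u < 2 ^ m) : (D m π u i).Nonempty := by
  by_contra hc
  rw [Set.not_nonempty_iff_eq_empty] at hc
  have hall : ∀ l, 1 ≤ l → l ≤ m → bit l (i + u) = bit l i := by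
    intro l hl1 hlm
    have hmem : π.symm l ∈ Finset.Icc 1 m := by
      rw [hπ (π.symm l), Equiv.apply_symm_apply]
      exact Finset.mem_Icc.mpr ⟨hl1, hlm⟩
    have : π.symm l ∉ D m π u i := by rw [hc]; exact Set.notMem_empty _
    simp only [D, Set.mem_setOf_eq, not_and, not_not, Equiv.apply_symm_apply] at this
    exact this hmem
  have := eq_of_bit_eq m (i + u) i hiu (by omega) hall
  omega

end Main2

end GDJ
namespace GDJ

section Main3

variable (q m : ℕ) (π : Equiv.Perm ℕ) (g : ℕ → ℕ)

lemma v_facts (hπ : ∀ α, α ∈ Finset.Icc 1 m ↔ π α ∈ Finset.Icc 1 m)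
    (hm : 1 ≤ m) {u i : ℕ} (hu0 : 0 < u) (hiu : i + u < 2 ^ m)
    (hb : bit (π 1) (i + u) = bit (π 1) i) :
    2 ≤ V m π u i ∧ V m π u i ≤ m ∧
      (∀ l, 1 ≤ l → l < V m π u i → bit (π l) (i + u) = bit (π l) i) ∧
      bit (π (V m π u i)) (i + u) ≠ bit (π (V m π u i)) i := by
  have hne := D_nonempty m π hm hπ hu0 hiu
  have hmem : V m π u i ∈ D m π u i := Nat.sInf_mem hne
  obtain ⟨hIcc, hdiff⟩ := hmem
  have h1m := Finset.mem_Icc.mp hIcc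
  have hagree : ∀ l, 1 ≤ l → l < V m π u i → bit (π l) (i + u) = bit (π l) i := by
    intro l hl1 hlv
    by_contra hc
    exact Nat.notMem_of_lt_sInf hlv ⟨Finset.mem_Icc.mpr ⟨hl1, by omega⟩, hc⟩
  have hv1 : V m π u i ≠ 1 := by
    intro h; rw [h] at hdiff; exact hdiff hb
  exact ⟨by omega, h1m.2, hagree, hdiff⟩

lemma pi_one_pos (hπ : ∀ α, α ∈ Finset.Icc 1 m ↔ π α ∈ Finset.Icc 1 m) (hm : 1 ≤ m) :
    1 ≤ π 1 :=
  (Finset.mem_Icc.mp ((hπ 1).mp (Finset.mem_Icc.mpr ⟨le_rfl, hm⟩))).1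

lemma flip_facts (hπ : ∀ α, α ∈ Finset.Icc 1 m ↔ π α ∈ Finset.Icc 1 m)
    (hm : 1 ≤ m) {u i : ℕ} (hu0 : 0 < u) (hiu : i + u < 2 ^ m)
    (hb : bit (π 1) (i + u) = bit (π 1) i) :
    flip (π (V m π u i - 1)) i + u = flip (π (V m π u i - 1)) (i + u) ∧
      bit (π 1) (flip (π (V m π u i - 1)) i + u) = bit (π 1) (flip (π (V m π u i - 1)) i) ∧
      V m π u (flip (π (V m π u i - 1)) i) = V m π u i := by
  obtain ⟨hv2, hvm, hagree, hdiff⟩ := v_facts m π hπ hm hu0 hiu hb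
  set v := V m π u i with hvdef
  set p := π (v - 1) with hpdef
  have hw : v - 1 ∈ Finset.Icc 1 m := Finset.mem_Icc.mpr ⟨by omega, by omega⟩
  have hp1 : 1 ≤ p := (Finset.mem_Icc.mp ((hπ (v-1)).mp hw)).1
  have hpij : bit p i = bit p (i + u) := (hagree (v - 1) (by omega) (by omega)).symm
  have hadd : flip p i + u = flip p (i + u) := flip_add hpij
  have hbits : ∀ l, 1 ≤ l → 1 ≤ π l →
      (bit (π l) (flip p (i + u)) = bit (π l) (flip p i) ↔
        bit (π l) (i + u) = bit (π l) i) := by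
    intro l hl1 hπl1
    by_cases hc : l = v - 1
    · subst hc
      rw [← hpdef, bit_flip_self, bit_flip_self]
      have hbl := bit_lt p (i + u)
      have hbl2 := bit_lt p i
      omega
    · have hπlp : π l ≠ p := fun h => hc (π.injective h)
      rw [bit_flip_ne hπl1 hp1 hπlp, bit_flip_ne hπl1 hp1 hπlp]
  have hD : D m π u (flip p i) = D m π u i := by
    ext l
    simp only [D, Set.mem_setOf_eq, hadd]
    constructor
    · rintro ⟨hlm, hne⟩
      have h1 := Finset.mem_Icc.mp hlm
      have h2 := (Finset.mem_Icc.mp ((hπ l).mp hlm)).1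
      exact ⟨hlm, fun hcon => hne ((hbits l h1.1 h2).mpr hcon)⟩
    · rintro ⟨hlm, hne⟩
      have h1 := Finset.mem_Icc.mp hlm
      have h2 := (Finset.mem_Icc.mp ((hπ l).mp hlm)).1
      exact ⟨hlm, fun hcon => hne ((hbits l h1.1 h2).mp hcon)⟩
  have hbit1 : bit (π 1) (flip p i + u) = bit (π 1) (flip p i) := by
    rw [hadd]
    exact (hbits 1 le_rfl (pi_one_pos m π hπ hm)).mpr hb
  refine ⟨hadd, hbit1, ?_⟩
  show sInf (D m π u (flip p i)) = v
  rw [hD]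
  rfl

lemma key (hq : 2 ∣ q) (hq0 : 0 < q) (hm : 1 ≤ m)
    (hπ : ∀ α, α ∈ Finset.Icc 1 m ↔ π α ∈ Finset.Icc 1 m)
    {u : ℕ} (hu0 : 0 < u) (hum : u < 2 ^ m) :
    ∑ i ∈ Finset.range (2 ^ m - u), T q m π g u i = 0 := by
  apply Finset.sum_involution (g := fun i _ => G m π u i)
  · -- f a + f (g a) = 0
    intro i hi
    have hiu : i + u < 2 ^ m := by
      have := Finset.mem_range.mp hi; omega
    by_cases hb : bit (π 1) (i + u) = bit (π 1) i
    · obtain ⟨hv2, hvm, hagree, hdiff⟩ := v_facts m π hπ hm hu0 hiu hb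
      obtain ⟨hadd, hbit1, _⟩ := flip_facts m π hπ hm hu0 hiu hb
      set v := V m π u i with hvdef
      set p := π (v - 1) with hpdef
      have hG : G m π u i = flip p i := by rw [G, if_pos hb]
      obtain ⟨s, hs, hdel⟩ := delta q m π g hm hπ hv2 hvm i (i + u) hagree hdiff
      rw [hG, T_agree q m π g hq hq0 hb, T_agree q m π g hq hq0 hbit1, hadd, hdel,
        E_add_half hq hq0 _ s hs]
      ring
    · have hG : G m π u i = i := by rw [G, if_neg hb]
      rw [hG, T_disagree q m π g hq hq0 hb]
      ring
  · -- f a ≠ 0 → g a ≠ a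
    intro i hi hT
    have hiu : i + u < 2 ^ m := by
      have := Finset.mem_range.mp hi; omega
    by_cases hb : bit (π 1) (i + u) = bit (π 1) i
    · rw [G, if_pos hb]
      exact flip_ne
    · exact absurd (T_disagree q m π g hq hq0 hb) hT
  · -- g a ∈ s
    intro i hi
    have hiu : i + u < 2 ^ m := by
      have := Finset.mem_range.mp hi; omega
    by_cases hb : bit (π 1) (i + u) = bit (π 1) i
    · obtain ⟨hv2, hvm, hagree, hdiff⟩ := v_facts m π hπ hm hu0 hiu hb
      obtain ⟨hadd, _, _⟩ := flip_facts m π hπ hm hu0 hiu hb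
      rw [G, if_pos hb]
      have hw : V m π u i - 1 ∈ Finset.Icc 1 m := Finset.mem_Icc.mpr ⟨by omega, by omega⟩
      have hpIcc := Finset.mem_Icc.mp ((hπ (V m π u i - 1)).mp hw)
      have : flip (π (V m π u i - 1)) (i + u) < 2 ^ m := flip_lt hpIcc.2 hpIcc.1 hiu
      rw [Finset.mem_range]
      omega
    · rw [G, if_neg hb]; exact hi
  · -- g (g a) = a
    intro i hi
    have hiu : i + u < 2 ^ m := by
      have := Finset.mem_range.mp hi; omega
    by_cases hb : bit (π 1) (i + u) = bit (π 1) i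
    · obtain ⟨hadd, hbit1, hV⟩ := flip_facts m π hπ hm hu0 hiu hb
      have hG : G m π u i = flip (π (V m π u i - 1)) i := by rw [G, if_pos hb]
      rw [hG]
      rw [G, if_pos hbit1, hV, flip_flip]
    · have hG : G m π u i = i := by rw [G, if_neg hb]
      rw [hG, G, if_neg hb]

end Main3

end GDJ
theorem stmt11 (q m : ℕ) (hq : 2 ∣ q) (hq0 : 0 < q) (hm : 1 ≤ m)
    (π : Equiv.Perm ℕ) (hπ : ∀ α, α ∈ Finset.Icc 1 m ↔ π α ∈ Finset.Icc 1 m)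
    (g : ℕ → ℕ) :
    (∀ u : ℤ, u ≠ 0 → |u| < 2 ^ m →
        rho (2 ^ m) (CGDJ q m π g 0) (CGDJ q m π g 0) u +
          rho (2 ^ m) (CGDJ q m π g 1) (CGDJ q m π g 1) u = 0) ∧
      rho (2 ^ m) (CGDJ q m π g 0) (CGDJ q m π g 0) 0 +
        rho (2 ^ m) (CGDJ q m π g 1) (CGDJ q m π g 1) 0 = 2 ^ (m + 1) := by
  have h2m : ((2 : ℤ) ^ m) = ((2 ^ m : ℕ) : ℤ) := by push_cast; ring
  constructor
  · intro u hu0 habs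
    rw [h2m] at habs
    rcases lt_trichotomy u 0 with hneg | hzero | hpos
    · set n : ℕ := (-u).toNat with hn
      have hn0 : 0 < n := by omega
      have hnm : n < 2 ^ m := by
        rw [abs_of_neg hneg] at habs
        omega
      have hif : ¬ (0 ≤ u) := by omega
      have key1 := GDJ.key q m π g hq hq0 hm hπ hn0 hnm
      rw [rho, rho, if_neg hif, if_neg hif, ← Finset.sum_add_distrib]
      have hsum : ∑ i ∈ Finset.range (2 ^ m - n),
          (CGDJ q m π g 0 i * (starRingEnd ℂ) (CGDJ q m π g 0 (i + n)) +
            CGDJ q m π g 1 i * (starRingEnd ℂ) (CGDJ q m π g 1 (i + n)))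
          = (starRingEnd ℂ) (∑ i ∈ Finset.range (2 ^ m - n), GDJ.T q m π g n i) := by
        rw [map_sum]
        apply Finset.sum_congr rfl
        intro i _
        simp only [GDJ.T, map_add, map_mul, Complex.conj_conj]
        ring
      rw [hsum, key1, map_zero]
    · exact absurd hzero hu0
    · set n : ℕ := u.toNat with hn
      have hn0 : 0 < n := by omega
      have hnm : n < 2 ^ m := by
        rw [abs_of_pos hpos] at habs
        omega
      have hif : (0 ≤ u) := by omega
      have key1 := GDJ.key q m π g hq hq0 hm hπ hn0 hnm
      rw [rho, rho, if_pos hif, if_pos hif, ← Finset.sum_add_distrib]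
      exact key1
  · have hself : ∀ (k i : ℕ),
        CGDJ q m π g k i * (starRingEnd ℂ) (CGDJ q m π g k i) = 1 := by
      intro k i
      exact GDJ.self_term q _
    rw [rho, rho, if_pos le_rfl, if_pos le_rfl]
    simp only [Int.toNat_zero, Nat.sub_zero, add_zero, hself]
    rw [Finset.sum_const, Finset.card_range, nsmul_eq_mul, mul_one]
    push_cast
    ring
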